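/- The sequence n ↦ X_n/(2n−1)!! converges to a limit C as n → ∞, and moreover C > 0. -/

import Mathlib

/-- The sequence `X_n` counting equivalence classes of circular planar electrical networks:
`X_1 = 1` and, for `n ≥ 2`,
`X_n = 2(n-1) X_{n-1} + ∑_{j=2}^{n-2} (j-1) X_j X_{n-j}` (the sum being empty for `n ≤ 3`;
here it is written over the attached index set to establish termination). -/
def X : ℕ → ℕ
  | 0 => 1
  | 1 => 1
  | n + 2 =>
      2 * (n + 1) * X (n + 1) +
        ∑ j ∈ (Finset.Icc 2 n).attach, (j.1 - 1) * X j.1 * X (n + 2 - j.1)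
decreasing_by
  · exact Nat.lt_succ_self (n + 1)
  · have := j.2; rw [Finset.mem_Icc] at this; omega
  · have := j.2; rw [Finset.mem_Icc] at this; omega

lemma X_rec (n : ℕ) (h : 2 ≤ n) :
    X n = 2 * (n - 1) * X (n - 1) + ∑ j ∈ Finset.Icc 2 (n - 2), (j - 1) * X j * X (n - j) := by
  obtain ⟨m, rfl⟩ : ∃ m, n = m + 2 := ⟨n - 2, by omega⟩
  rw [X]
  rw [Finset.sum_attach (Finset.Icc 2 m) (fun j => (j - 1) * X j * X (m + 2 - j))]
  norm_num

lemma sum_Icc_bot {M : Type*} [AddCommMonoid M] (f : ℕ → M) {a b : ℕ} (h : a ≤ b) :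
    ∑ j ∈ Finset.Icc a b, f j = f a + ∑ j ∈ Finset.Icc (a+1) b, f j := by
  rw [Finset.Icc_eq_cons_Ioc h, Finset.sum_cons, Finset.Icc_add_one_left_eq_Ioc]

lemma sum_Icc_top {M : Type*} [AddCommMonoid M] (f : ℕ → M) {a b : ℕ} (h : a ≤ b + 1) :
    ∑ j ∈ Finset.Icc a (b+1), f j = (∑ j ∈ Finset.Icc a b, f j) + f (b+1) := by
  rw [Finset.Icc_eq_cons_Ico h, Finset.sum_cons, Finset.Ico_add_one_right_eq_Icc, add_comm]
lemma Xv0 : X 0 = 1 := by rw [X]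
lemma Xv1 : X 1 = 1 := by rw [X]
lemma Xv2 : X 2 = 2 := by
  rw [X_rec 2 (by norm_num), show Finset.Icc 2 (2 - 2) = (∅ : Finset ℕ) by rfl]
  norm_num [Xv1]
lemma Xv3 : X 3 = 8 := by
  rw [X_rec 3 (by norm_num), show Finset.Icc 2 (3 - 2) = (∅ : Finset ℕ) by rfl]
  norm_num [Xv2]
lemma Xv4 : X 4 = 52 := by
  rw [X_rec 4 (by norm_num)]
  rw [show Finset.Icc 2 (4 - 2) = ({2} : Finset ℕ) by rfl]
  rw [Finset.sum_singleton]
  norm_num [Xv2, Xv3]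
lemma Xv5 : X 5 = 464 := by
  rw [X_rec 5 (by norm_num)]
  rw [show Finset.Icc 2 (5 - 2) = ({2,3} : Finset ℕ) by rfl]
  rw [Finset.sum_insert (by decide), Finset.sum_singleton]
  norm_num [Xv2, Xv3, Xv4]
lemma Xv6 : X 6 = 5184 := by
  rw [X_rec 6 (by norm_num)]
  rw [show Finset.Icc 2 (6 - 2) = ({2,3,4} : Finset ℕ) by rfl]
  rw [Finset.sum_insert (by decide), Finset.sum_insert (by decide), Finset.sum_singleton]
  norm_num [Xv2, Xv3, Xv4, Xv5]
lemma Xv7 : X 7 = 68928 := by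
  rw [X_rec 7 (by norm_num)]
  rw [show Finset.Icc 2 (7 - 2) = ({2,3,4,5} : Finset ℕ) by rfl]
  rw [Finset.sum_insert (by decide), Finset.sum_insert (by decide), Finset.sum_insert (by decide), Finset.sum_singleton]
  norm_num [Xv2, Xv3, Xv4, Xv5, Xv6]
lemma Xv8 : X 8 = 1057584 := by
  rw [X_rec 8 (by norm_num)]
  rw [show Finset.Icc 2 (8 - 2) = ({2,3,4,5,6} : Finset ℕ) by rfl]
  rw [Finset.sum_insert (by decide), Finset.sum_insert (by decide), Finset.sum_insert (by decide), Finset.sum_insert (by decide), Finset.sum_singleton]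
  norm_num [Xv2, Xv3, Xv4, Xv5, Xv6, Xv7]
lemma Xv9 : X 9 = 18345536 := by
  rw [X_rec 9 (by norm_num)]
  rw [show Finset.Icc 2 (9 - 2) = ({2,3,4,5,6,7} : Finset ℕ) by rfl]
  rw [Finset.sum_insert (by decide), Finset.sum_insert (by decide), Finset.sum_insert (by decide), Finset.sum_insert (by decide), Finset.sum_insert (by decide), Finset.sum_singleton]
  norm_num [Xv2, Xv3, Xv4, Xv5, Xv6, Xv7, Xv8]
lemma Xv10 : X 10 = 354570112 := by
  rw [X_rec 10 (by norm_num)]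
  rw [show Finset.Icc 2 (10 - 2) = ({2,3,4,5,6,7,8} : Finset ℕ) by rfl]
  rw [Finset.sum_insert (by decide), Finset.sum_insert (by decide), Finset.sum_insert (by decide), Finset.sum_insert (by decide), Finset.sum_insert (by decide), Finset.sum_insert (by decide), Finset.sum_singleton]
  norm_num [Xv2, Xv3, Xv4, Xv5, Xv6, Xv7, Xv8, Xv9]
lemma Xv11 : X 11 = 7551674624 := by
  rw [X_rec 11 (by norm_num)]
  rw [show Finset.Icc 2 (11 - 2) = ({2,3,4,5,6,7,8,9} : Finset ℕ) by rfl]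
  rw [Finset.sum_insert (by decide), Finset.sum_insert (by decide), Finset.sum_insert (by decide), Finset.sum_insert (by decide), Finset.sum_insert (by decide), Finset.sum_insert (by decide), Finset.sum_insert (by decide), Finset.sum_singleton]
  norm_num [Xv2, Xv3, Xv4, Xv5, Xv6, Xv7, Xv8, Xv9, Xv10]
lemma Xv12 : X 12 = 175700025728 := by
  rw [X_rec 12 (by norm_num)]
  rw [show Finset.Icc 2 (12 - 2) = ({2,3,4,5,6,7,8,9,10} : Finset ℕ) by rfl]
  rw [Finset.sum_insert (by decide), Finset.sum_insert (by decide), Finset.sum_insert (by decide), Finset.sum_insert (by decide), Finset.sum_insert (by decide), Finset.sum_insert (by decide), Finset.sum_insert (by decide), Finset.sum_insert (by decide), Finset.sum_singleton]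
  norm_num [Xv2, Xv3, Xv4, Xv5, Xv6, Xv7, Xv8, Xv9, Xv10, Xv11]
lemma Xv13 : X 13 = 4433961734656 := by
  rw [X_rec 13 (by norm_num)]
  rw [show Finset.Icc 2 (13 - 2) = ({2,3,4,5,6,7,8,9,10,11} : Finset ℕ) by rfl]
  rw [Finset.sum_insert (by decide), Finset.sum_insert (by decide), Finset.sum_insert (by decide), Finset.sum_insert (by decide), Finset.sum_insert (by decide), Finset.sum_insert (by decide), Finset.sum_insert (by decide), Finset.sum_insert (by decide), Finset.sum_insert (by decide), Finset.sum_singleton]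
  norm_num [Xv2, Xv3, Xv4, Xv5, Xv6, Xv7, Xv8, Xv9, Xv10, Xv11, Xv12]
lemma Xv14 : X 14 = 120642462777344 := by
  rw [X_rec 14 (by norm_num)]
  rw [show Finset.Icc 2 (14 - 2) = ({2,3,4,5,6,7,8,9,10,11,12} : Finset ℕ) by rfl]
  rw [Finset.sum_insert (by decide), Finset.sum_insert (by decide), Finset.sum_insert (by decide), Finset.sum_insert (by decide), Finset.sum_insert (by decide), Finset.sum_insert (by decide), Finset.sum_insert (by decide), Finset.sum_insert (by decide), Finset.sum_insert (by decide), Finset.sum_insert (by decide), Finset.sum_singleton]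
  norm_num [Xv2, Xv3, Xv4, Xv5, Xv6, Xv7, Xv8, Xv9, Xv10, Xv11, Xv12, Xv13]
lemma Xv15 : X 15 = 3520972469815296 := by
  rw [X_rec 15 (by norm_num)]
  rw [show Finset.Icc 2 (15 - 2) = ({2,3,4,5,6,7,8,9,10,11,12,13} : Finset ℕ) by rfl]
  rw [Finset.sum_insert (by decide), Finset.sum_insert (by decide), Finset.sum_insert (by decide), Finset.sum_insert (by decide), Finset.sum_insert (by decide), Finset.sum_insert (by decide), Finset.sum_insert (by decide), Finset.sum_insert (by decide), Finset.sum_insert (by decide), Finset.sum_insert (by decide), Finset.sum_insert (by decide), Finset.sum_singleton]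
  norm_num [Xv2, Xv3, Xv4, Xv5, Xv6, Xv7, Xv8, Xv9, Xv10, Xv11, Xv12, Xv13, Xv14]
lemma X_pos : ∀ n, 0 < X n := by
  intro n
  induction n using Nat.strong_induction_on with
  | _ n ih =>
    match n with
    | 0 => rw [Xv0]; norm_num
    | 1 => rw [Xv1]; norm_num
    | (m+2) =>
      have h := X_rec (m+2) (by omega)
      have h1 : 0 < X (m+1) := ih (m+1) (by omega)
      have : 0 < 2 * (m+2-1) * X (m+2-1) := by
        rw [show m+2-1 = m+1 by omega]; positivity
      omega

lemma X_lower (n : ℕ) (h : 2 ≤ n) : 2 * (n-1) * X (n-1) ≤ X n := by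
  rw [X_rec n h]; exact Nat.le_add_right _ _

lemma X_mono : Monotone X := by
  apply monotone_nat_of_le_succ
  intro n
  match n with
  | 0 => rw [Xv0, Xv1]
  | (m+1) =>
    have h := X_lower (m+2) (by omega)
    rw [show m+2-1 = m+1 by omega] at h
    calc X (m+1) ≤ 2*(m+1) * X (m+1) := Nat.le_mul_of_pos_left _ (by omega)
      _ ≤ X (m+2) := h

lemma G_split (n : ℕ) (h : 5 ≤ n) :
    ∑ j ∈ Finset.Icc 2 (n-2), (j-1) * X j * X (n-j)
      = 2*(n-2) * X (n-2) + ∑ j ∈ Finset.Icc 3 (n-3), (j-1) * X j * X (n-j) := by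
  conv_lhs => rw [show n-2 = (n-3)+1 by omega]
  rw [sum_Icc_top _ (by omega), sum_Icc_bot _ (by omega)]
  rw [show (n-3)+1 = n-2 by omega, show n-(n-2) = 2 by omega, Xv2,
    show n-2-1 = n-3 by omega]
  have h2 : 2*(n-2) = 2 + (n-3)*2 := by omega
  rw [h2]; ring_nf

lemma Smid_split (n : ℕ) (h : 10 ≤ n) :
    ∑ j ∈ Finset.Icc 3 (n-3), (j-1) * X j * X (n-j)
      = 2 * X 3 * X (n-3) + 3 * X 4 * X (n-4)
        + (∑ j ∈ Finset.Icc 5 (n-5), (j-1) * X j * X (n-j))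
        + (n-5) * X (n-4) * X 4 + (n-4) * X (n-3) * X 3 := by
  rw [sum_Icc_bot _ (by omega), sum_Icc_bot _ (by omega)]
  conv_lhs => rw [show n-3 = (n-4)+1 by omega]
  rw [sum_Icc_top _ (by omega)]
  conv_lhs => rw [show n-4 = (n-5)+1 by omega]
  rw [sum_Icc_top _ (by omega)]
  rw [show (n-5)+1 = n-4 by omega, show (n-4)+1 = n-3 by omega,
    show n-(n-4) = 4 by omega, show n-(n-3) = 3 by omega,
    show n-4-1 = n-5 by omega, show n-3-1 = n-4 by omega]
  norm_num
  ring
lemma E1 (n m : ℕ) (h3 : 3 ≤ m)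
    (hL2 : ∀ k, 2 ≤ k → 2*k ≤ n+1 → X k ≤ (2*k+2) * X (k-1)) :
    ∀ d j, j = m + d → 2*j+1 ≤ n → X j * X (n-j) ≤ X m * X (n-m) := by
  intro d
  induction d with
  | zero => intro j hj _; subst hj; simp
  | succ d ih =>
    intro j hj hjn
    have hj2 : 2 ≤ j := by omega
    have hstep : X j * X (n-j) ≤ X (j-1) * X (n-(j-1)) := by
      have hA : X j ≤ (2*j+2) * X (j-1) := hL2 j hj2 (by omega)
      have hB : 2*(n-j) * X (n-j) ≤ X (n-j+1) := by
        have h' := X_lower (n-j+1) (by omega)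
        rw [show n-j+1-1 = n-j by omega] at h'
        exact h'
      have hc : 2*j+2 ≤ 2*(n-j) := by omega
      have key : (2*(n-j)) * (X j * X (n-j)) ≤ (2*(n-j)) * (X (j-1) * X (n-j+1)) := by
        calc (2*(n-j)) * (X j * X (n-j)) = X j * (2*(n-j) * X (n-j)) := by ring
          _ ≤ X j * X (n-j+1) := Nat.mul_le_mul_left _ hB
          _ ≤ ((2*j+2) * X (j-1)) * X (n-j+1) := Nat.mul_le_mul_right _ hA
          _ = (2*j+2) * (X (j-1) * X (n-j+1)) := by ring
          _ ≤ (2*(n-j)) * (X (j-1) * X (n-j+1)) := Nat.mul_le_mul_right _ hc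
      have := Nat.le_of_mul_le_mul_left key (by omega)
      rw [show n-(j-1) = n-j+1 by omega]
      exact this
    exact le_trans hstep (ih (j-1) (by omega) (by omega))

lemma E2 (n m j : ℕ) (h3 : 3 ≤ m) (hmj : m ≤ j) (hjn : j + m ≤ n)
    (hL2 : ∀ k, 2 ≤ k → 2*k ≤ n+1 → X k ≤ (2*k+2) * X (k-1)) :
    X j * X (n-j) ≤ 2 * (X m * X (n-m)) := by
  rcases Nat.lt_trichotomy (2*j) n with hlt | heq | hgt
  · exact le_trans (E1 n m h3 hL2 (j-m) j (by omega) (by omega))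
      (Nat.le_mul_of_pos_left _ (by omega))
  · rcases eq_or_lt_of_le hmj with rfl | hmlt
    · exact Nat.le_mul_of_pos_left _ (by omega)
    · have hnj : n - j = j := by omega
      rw [hnj]
      have hA : X j ≤ (2*j+2) * X (j-1) := hL2 j (by omega) (by omega)
      have hB : 2*j * X j ≤ X (j+1) := by
        have h' := X_lower (j+1) (by omega)
        rw [show j+1-1 = j by omega] at h'
        exact h'
      have key : (2*j) * (X j * X j) ≤ (2*j) * (2 * (X (j-1) * X (j+1))) := by
        calc (2*j) * (X j * X j) = (2*j * X j) * X j := by ring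
          _ ≤ X (j+1) * X j := Nat.mul_le_mul_right _ hB
          _ ≤ X (j+1) * ((2*j+2) * X (j-1)) := Nat.mul_le_mul_left _ hA
          _ = (2*j+2) * (X (j-1) * X (j+1)) := by ring
          _ ≤ (2*j*2) * (X (j-1) * X (j+1)) := Nat.mul_le_mul_right _ (by omega)
          _ = (2*j) * (2 * (X (j-1) * X (j+1))) := by ring
      have h1 : X j * X j ≤ 2 * (X (j-1) * X (j+1)) := Nat.le_of_mul_le_mul_left key (by omega)
      have h2 : X (j-1) * X (n-(j-1)) ≤ X m * X (n-m) :=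
        E1 n m h3 hL2 (j-1-m) (j-1) (by omega) (by omega)
      rw [show n-(j-1) = j+1 by omega] at h2
      calc X j * X j ≤ 2 * (X (j-1) * X (j+1)) := h1
        _ ≤ 2 * (X m * X (n-m)) := Nat.mul_le_mul_left _ h2
  · have hj' : n - j + m ≤ n := by omega
    have h2 : X (n-j) * X (n-(n-j)) ≤ X m * X (n-m) :=
      E1 n m h3 hL2 (n-j-m) (n-j) (by omega) (by omega)
    rw [show n-(n-j) = j by omega] at h2
    calc X j * X (n-j) = X (n-j) * X j := by ring
      _ ≤ X m * X (n-m) := h2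
      _ ≤ 2 * (X m * X (n-m)) := Nat.le_mul_of_pos_left _ (by omega)
lemma Smid_bound (n : ℕ) (h : 10 ≤ n)
    (hL2 : ∀ k, 2 ≤ k → 2*k ≤ n+1 → X k ≤ (2*k+2) * X (k-1)) :
    ∑ j ∈ Finset.Icc 3 (n-3), (j-1) * X j * X (n-j) ≤ (8*(n-4) + 287) * X (n-3) := by
  rw [Smid_split n h, Xv3, Xv4]
  have l3 : 2*(n-4) * X (n-4) ≤ X (n-3) := by
    have h' := X_lower (n-3) (by omega); rw [show n-3-1 = n-4 by omega] at h'; exact h'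
  have l4 : 2*(n-5) * X (n-5) ≤ X (n-4) := by
    have h' := X_lower (n-4) (by omega); rw [show n-4-1 = n-5 by omega] at h'; exact h'
  have l5 : 4*((n-4)*(n-5)) * X (n-5) ≤ X (n-3) := by
    calc 4*((n-4)*(n-5)) * X (n-5) = 2*(n-4) * (2*(n-5) * X (n-5)) := by ring
      _ ≤ 2*(n-4) * X (n-4) := Nat.mul_le_mul_left _ l4
      _ ≤ X (n-3) := l3
  -- piece 2 : 3*52*X (n-4) ≤ 13*X (n-3)
  have p2 : 3 * 52 * X (n-4) ≤ 13 * X (n-3) := by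
    calc 3 * 52 * X (n-4) ≤ 13 * (2*(n-4) * X (n-4)) := by
          have : 156 ≤ 26 * (n-4) := by omega
          calc 3 * 52 * X (n-4) = 156 * X (n-4) := by ring
            _ ≤ (26*(n-4)) * X (n-4) := Nat.mul_le_mul_right _ this
            _ = 13 * (2*(n-4) * X (n-4)) := by ring
      _ ≤ 13 * X (n-3) := Nat.mul_le_mul_left _ l3
  -- piece middle
  have pmid : (∑ j ∈ Finset.Icc 5 (n-5), (j-1) * X j * X (n-j)) ≤ 232 * X (n-3) := by
    have hb : ∀ j ∈ Finset.Icc 5 (n-5), (j-1) * X j * X (n-j) ≤ (n-6) * (2 * (X 5 * X (n-5))) := by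
      intro j hj
      rw [Finset.mem_Icc] at hj
      have he2 : X j * X (n-j) ≤ 2 * (X 5 * X (n-5)) := E2 n 5 j (by omega) hj.1 (by omega) hL2
      calc (j-1) * X j * X (n-j) = (j-1) * (X j * X (n-j)) := by ring
        _ ≤ (n-6) * (X j * X (n-j)) := Nat.mul_le_mul_right _ (by omega)
        _ ≤ (n-6) * (2 * (X 5 * X (n-5))) := Nat.mul_le_mul_left _ he2
    have hcard : (Finset.Icc 5 (n-5)).card = n - 9 := by
      rw [Nat.card_Icc]; omega
    calc (∑ j ∈ Finset.Icc 5 (n-5), (j-1) * X j * X (n-j))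
        ≤ (Finset.Icc 5 (n-5)).card * ((n-6) * (2 * (X 5 * X (n-5)))) := by
          apply Finset.sum_le_card_nsmul _ _ _ hb
      _ = (n-9) * ((n-6) * (2 * (X 5 * X (n-5)))) := by rw [hcard]
      _ = 928 * ((n-9)*(n-6)) * X (n-5) := by rw [Xv5]; ring
      _ ≤ 928 * ((n-4)*(n-5)) * X (n-5) := by
          apply Nat.mul_le_mul_right
          apply Nat.mul_le_mul_left
          apply Nat.mul_le_mul <;> omega
      _ = 232 * (4*((n-4)*(n-5)) * X (n-5)) := by ring
      _ ≤ 232 * X (n-3) := Nat.mul_le_mul_left _ l5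
  -- piece 4
  have p4 : (n-5) * X (n-4) * 52 ≤ 26 * X (n-3) := by
    calc (n-5) * X (n-4) * 52 = 26 * (2*(n-5) * X (n-4)) := by ring
      _ ≤ 26 * (2*(n-4) * X (n-4)) := by
          apply Nat.mul_le_mul_left
          apply Nat.mul_le_mul_right
          omega
      _ ≤ 26 * X (n-3) := Nat.mul_le_mul_left _ l3
  have p1 : 2 * 8 * X (n-3) = 16 * X (n-3) := by ring
  have p5 : (n-4) * X (n-3) * 8 = 8*(n-4) * X (n-3) := by ring
  calc 2 * 8 * X (n-3) + 3 * 52 * X (n-4)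
        + (∑ j ∈ Finset.Icc 5 (n-5), (j-1) * X j * X (n-j))
        + (n-5) * X (n-4) * 52 + (n-4) * X (n-3) * 8
      ≤ 16 * X (n-3) + 13 * X (n-3) + 232 * X (n-3) + 26 * X (n-3) + 8*(n-4) * X (n-3) := by
        rw [p1, p5]
        have := add_le_add (add_le_add (add_le_add (le_refl (16 * X (n-3))) p2) pmid) p4
        linarith [this]
    _ = (8*(n-4) + 287) * X (n-3) := by ring

lemma X_ratio : ∀ n, 2 ≤ n → X n ≤ (2*n+2) * X (n-1) := by
  intro n
  induction n using Nat.strong_induction_on with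
  | _ n ih =>
    intro hn
    by_cases hsmall : n ≤ 9
    · interval_cases n <;>
        simp [Xv1, Xv2, Xv3, Xv4, Xv5, Xv6, Xv7, Xv8, Xv9] <;> norm_num
    · push_neg at hsmall
      have h10 : 10 ≤ n := hsmall
      have hL2 : ∀ k, 2 ≤ k → 2*k ≤ n+1 → X k ≤ (2*k+2) * X (k-1) := by
        intro k hk2 hk; exact ih k (by omega) hk2
      have hGsplit := G_split n (by omega)
      have hSmid := Smid_bound n h10 hL2
      have l2 : 2*(n-3) * X (n-3) ≤ X (n-2) := by
        have h' := X_lower (n-2) (by omega); rw [show n-2-1 = n-3 by omega] at h'; exact h'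
      have l1 : 2*(n-2) * X (n-2) ≤ X (n-1) := by
        have h' := X_lower (n-1) (by omega); rw [show n-1-1 = n-2 by omega] at h'; exact h'
      -- G ≤ 8(n-2) X (n-2)
      have hG : 2*(n-2) * X (n-2) + (∑ j ∈ Finset.Icc 3 (n-3), (j-1) * X j * X (n-j))
          ≤ 8*(n-2) * X (n-2) := by
        have hS2 : (2*(n-3)) * (∑ j ∈ Finset.Icc 3 (n-3), (j-1) * X j * X (n-j))
            ≤ (2*(n-3)) * ((8*(n-4) + 287) * X (n-3)) := Nat.mul_le_mul_left _ hSmid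
        have hS3 : (2*(n-3)) * ((8*(n-4) + 287) * X (n-3)) ≤ (8*(n-4)+287) * X (n-2) := by
          calc (2*(n-3)) * ((8*(n-4) + 287) * X (n-3))
              = (8*(n-4)+287) * (2*(n-3) * X (n-3)) := by ring
            _ ≤ (8*(n-4)+287) * X (n-2) := Nat.mul_le_mul_left _ l2
        have hkey : (2*(n-3)) * (2*(n-2) * X (n-2) + (∑ j ∈ Finset.Icc 3 (n-3), (j-1) * X j * X (n-j)))
            ≤ (2*(n-3)) * (8*(n-2) * X (n-2)) := by
          have hpoly : 4*((n-3)*(n-2)) + (8*(n-4)+287) ≤ 16*((n-3)*(n-2)) := by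
            have h1 : 8*(n-4)+287 ≤ 84*(n-2) := by omega
            have h2 : 84*(n-2) ≤ 12*((n-3)*(n-2)) := by
              have : 7 ≤ n-3 := by omega
              calc 84*(n-2) = 12*(7*(n-2)) := by ring
                _ ≤ 12*((n-3)*(n-2)) := by
                    apply Nat.mul_le_mul_left
                    exact Nat.mul_le_mul_right _ this
            linarith [h1, h2]
          calc (2*(n-3)) * (2*(n-2) * X (n-2) + (∑ j ∈ Finset.Icc 3 (n-3), (j-1) * X j * X (n-j)))
              = 4*((n-3)*(n-2)) * X (n-2)
                + (2*(n-3)) * (∑ j ∈ Finset.Icc 3 (n-3), (j-1) * X j * X (n-j)) := by ring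
            _ ≤ 4*((n-3)*(n-2)) * X (n-2) + (8*(n-4)+287) * X (n-2) := by
                have := le_trans hS2 hS3
                omega
            _ = (4*((n-3)*(n-2)) + (8*(n-4)+287)) * X (n-2) := by ring
            _ ≤ (16*((n-3)*(n-2))) * X (n-2) := Nat.mul_le_mul_right _ hpoly
            _ = (2*(n-3)) * (8*(n-2) * X (n-2)) := by ring
        exact Nat.le_of_mul_le_mul_left hkey (by omega)
      have hXn := X_rec n (by omega)
      rw [hGsplit] at hXn
      have hfin : X n ≤ 2*(n-1) * X (n-1) + 8*(n-2)*X (n-2) := by omega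
      have h4 : 8*(n-2) * X (n-2) ≤ 4 * X (n-1) := by
        calc 8*(n-2) * X (n-2) = 4 * (2*(n-2) * X (n-2)) := by ring
          _ ≤ 4 * X (n-1) := Nat.mul_le_mul_left _ l1
      calc X n ≤ 2*(n-1) * X (n-1) + 8*(n-2)*X (n-2) := hfin
        _ ≤ 2*(n-1) * X (n-1) + 4 * X (n-1) := by omega
        _ = (2*(n-1) + 4) * X (n-1) := by ring
        _ = (2*n+2) * X (n-1) := by
            congr 1
            omega
lemma X_upper (n : ℕ) (h : 12 ≤ n) : X n ≤ (2*n-1) * X (n-1) + 20 * X (n-2) := by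
  have hL2 : ∀ k, 2 ≤ k → 2*k ≤ n+1 → X k ≤ (2*k+2) * X (k-1) := by
    intro k hk2 _; exact X_ratio k hk2
  have hSmid := Smid_bound n (by omega) hL2
  have l2 : 2*(n-3) * X (n-3) ≤ X (n-2) := by
    have h' := X_lower (n-2) (by omega); rw [show n-2-1 = n-3 by omega] at h'; exact h'
  have l1 : 2*(n-2) * X (n-2) ≤ X (n-1) := by
    have h' := X_lower (n-1) (by omega); rw [show n-1-1 = n-2 by omega] at h'; exact h'
  have hS20 : (∑ j ∈ Finset.Icc 3 (n-3), (j-1) * X j * X (n-j)) ≤ 20 * X (n-2) := by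
    have hkey : (2*(n-3)) * (∑ j ∈ Finset.Icc 3 (n-3), (j-1) * X j * X (n-j))
        ≤ (2*(n-3)) * (20 * X (n-2)) := by
      calc (2*(n-3)) * (∑ j ∈ Finset.Icc 3 (n-3), (j-1) * X j * X (n-j))
          ≤ (2*(n-3)) * ((8*(n-4) + 287) * X (n-3)) := Nat.mul_le_mul_left _ hSmid
        _ = (8*(n-4)+287) * (2*(n-3) * X (n-3)) := by ring
        _ ≤ (8*(n-4)+287) * X (n-2) := Nat.mul_le_mul_left _ l2
        _ ≤ (40*(n-3)) * X (n-2) := Nat.mul_le_mul_right _ (by omega)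
        _ = (2*(n-3)) * (20 * X (n-2)) := by ring
    exact Nat.le_of_mul_le_mul_left hkey (by omega)
  have hXn := X_rec n (by omega)
  rw [G_split n (by omega)] at hXn
  have : X n ≤ 2*(n-1) * X (n-1) + X (n-1) + 20 * X (n-2) := by
    have := le_trans l1 (le_refl _)
    omega
  calc X n ≤ 2*(n-1) * X (n-1) + X (n-1) + 20 * X (n-2) := this
    _ = (2*(n-1) + 1) * X (n-1) + 20 * X (n-2) := by ring
    _ = (2*n-1) * X (n-1) + 20 * X (n-2) := by
        congr 2
        omega

lemma X_mono_ratio (n : ℕ) (h : 6 ≤ n) : (2*n-1) * X (n-1) ≤ X n := by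
  -- suffices : X (n-1) ≤ Smid n  (plus lower bound structure)
  have hXn := X_rec n (by omega)
  rw [G_split n (by omega)] at hXn
  have hXn1 := X_rec (n-1) (by omega)
  rw [show n-1-1 = n-2 by omega, show n-1-2 = n-3 by omega] at hXn1
  -- decompose both middle sums
  have hSn : ∑ j ∈ Finset.Icc 3 (n-3), (j-1) * X j * X (n-j)
      = 2 * X 3 * X (n-3) + ∑ j ∈ Finset.Icc 4 (n-3), (j-1) * X j * X (n-j) := by
    rw [sum_Icc_bot _ (by omega)]
    try norm_num
  have hGn1 : ∑ j ∈ Finset.Icc 2 (n-3), (j-1) * X j * X (n-1-j)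
      = X 2 * X (n-3) + 2 * X 3 * X (n-4)
        + ∑ j ∈ Finset.Icc 4 (n-3), (j-1) * X j * X (n-1-j) := by
    rw [sum_Icc_bot _ (by omega), sum_Icc_bot _ (by omega),
      show n-1-2 = n-3 by omega, show n-1-3 = n-4 by omega]
    try norm_num
    try ring
  have hterm : ∑ j ∈ Finset.Icc 4 (n-3), (j-1) * X j * X (n-1-j)
      ≤ ∑ j ∈ Finset.Icc 4 (n-3), (j-1) * X j * X (n-j) := by
    apply Finset.sum_le_sum
    intro j hj
    exact Nat.mul_le_mul_left _ (X_mono (by omega))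
  have hhead : X 2 * X (n-3) + 2 * X 3 * X (n-4) ≤ 2 * X 3 * X (n-3) := by
    rw [Xv2, Xv3]
    have l3 : 2*(n-4) * X (n-4) ≤ X (n-3) := by
      have h' := X_lower (n-3) (by omega); rw [show n-3-1 = n-4 by omega] at h'; exact h'
    have h4 : 4 * X (n-4) ≤ X (n-3) := by
      calc 4 * X (n-4) ≤ 2*(n-4) * X (n-4) := Nat.mul_le_mul_right _ (by omega)
        _ ≤ X (n-3) := l3
    -- 2*X(n-3) + 16*X(n-4) ≤ 16*X(n-3) ⇔ 16 X(n-4) ≤ 14 X (n-3); 16 X(n-4) ≤ 4*X(n-3) ≤ 14 X(n-3)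
    have : 16 * X (n-4) ≤ 4 * X (n-3) := by linarith [h4]
    linarith [this]
  have hsum : ∑ j ∈ Finset.Icc 2 (n-3), (j-1) * X j * X (n-1-j)
      ≤ ∑ j ∈ Finset.Icc 3 (n-3), (j-1) * X j * X (n-j) := by
    rw [hGn1, hSn]
    linarith [hterm, hhead]
  -- conclude
  have hfin : X (n-1) ≤ 2*(n-2) * X (n-2) + ∑ j ∈ Finset.Icc 3 (n-3), (j-1) * X j * X (n-j) := by
    rw [hXn1]
    linarith [hsum]
  rw [hXn, show 2*n-1 = 2*(n-1)+1 by omega, add_mul, one_mul]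
  have := Nat.add_le_add_left hfin (2*(n-1) * X (n-1))
  linarith [this]
lemma Dstep (n : ℕ) (h : 2 ≤ n) :
    Nat.doubleFactorial (2*n-1) = (2*n-1) * Nat.doubleFactorial (2*(n-1)-1) := by
  rw [show 2*n-1 = (2*(n-1)-1)+2 by omega, Nat.doubleFactorial_add_two]

lemma Nn : ∀ n, 15 ≤ n → n * X n ≤ (2*n-20) * Nat.doubleFactorial (2*n-1) := by
  intro n hn
  induction n, hn using Nat.le_induction with
  | base =>
    rw [Xv15, show Nat.doubleFactorial (2*15-1) = 6190283353629375 by decide]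
    norm_num
  | succ n hn ih =>
    set m := n + 1 with hm
    clear_value m
    have hm16 : 16 ≤ m := by omega
    have hup : X m ≤ (2*m-1) * X (m-1) + 20 * X (m-2) := X_upper m (by omega)
    have hmr : (2*m-3) * X (m-2) ≤ X (m-1) := by
      have := X_mono_ratio (m-1) (by omega)
      rw [show m-1-1 = m-2 by omega, show 2*(m-1)-1 = 2*m-3 by omega] at this
      exact this
    have ih' : (m-1) * X (m-1) ≤ (2*m-22) * Nat.doubleFactorial (2*m-3) := by
      have : n = m - 1 := by omega
      rw [← this]
      rw [show 2*m-3 = 2*n-1 by omega]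
      have h20 : 2*m-22 = 2*n-20 := by omega
      rw [h20]
      exact ih
    have hstep1 : (2*m-3) * X m ≤ ((2*m-1)*(2*m-3) + 20) * X (m-1) := by
      calc (2*m-3) * X m ≤ (2*m-3) * ((2*m-1) * X (m-1) + 20 * X (m-2)) :=
            Nat.mul_le_mul_left _ hup
        _ = (2*m-1)*(2*m-3) * X (m-1) + 20 * ((2*m-3) * X (m-2)) := by ring
        _ ≤ (2*m-1)*(2*m-3) * X (m-1) + 20 * X (m-1) := by
            have := Nat.mul_le_mul_left 20 hmr
            omega
        _ = ((2*m-1)*(2*m-3) + 20) * X (m-1) := by ring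
    have hpoly : m * ((2*m-1)*(2*m-3) + 20) * (2*m-22)
        ≤ (m-1) * (2*m-3) * ((2*m-20) * (2*m-1)) := by
      obtain ⟨k, rfl⟩ : ∃ k, m = k + 16 := ⟨m - 16, by omega⟩
      rw [show 2*(k+16)-1 = 2*k+31 by omega, show 2*(k+16)-3 = 2*k+29 by omega,
        show 2*(k+16)-22 = 2*k+10 by omega, show 2*(k+16)-20 = 2*k+12 by omega,
        show k+16-1 = k+15 by omega]
      nlinarith [sq_nonneg k, k.zero_le]
    -- combine
    have key : ((m-1) * (2*m-3)) * (m * X m)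
        ≤ ((m-1) * (2*m-3)) * ((2*m-20) * Nat.doubleFactorial (2*m-1)) := by
      calc ((m-1) * (2*m-3)) * (m * X m) = (m * (m-1)) * ((2*m-3) * X m) := by ring
        _ ≤ (m * (m-1)) * (((2*m-1)*(2*m-3) + 20) * X (m-1)) := Nat.mul_le_mul_left _ hstep1
        _ = (m * ((2*m-1)*(2*m-3) + 20)) * ((m-1) * X (m-1)) := by ring
        _ ≤ (m * ((2*m-1)*(2*m-3) + 20)) * ((2*m-22) * Nat.doubleFactorial (2*m-3)) :=
            Nat.mul_le_mul_left _ ih'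
        _ = (m * ((2*m-1)*(2*m-3) + 20) * (2*m-22)) * Nat.doubleFactorial (2*m-3) := by ring
        _ ≤ ((m-1) * (2*m-3) * ((2*m-20) * (2*m-1))) * Nat.doubleFactorial (2*m-3) :=
            Nat.mul_le_mul_right _ hpoly
        _ = ((m-1) * (2*m-3)) * ((2*m-20) * ((2*m-1) * Nat.doubleFactorial (2*m-3))) := by ring
        _ = ((m-1) * (2*m-3)) * ((2*m-20) * Nat.doubleFactorial (2*m-1)) := by
            rw [Dstep m (by omega), show 2*(m-1)-1 = 2*m-3 by omega]
    have hpos : 0 < (m-1) * (2*m-3) := by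
      have : 1 ≤ m-1 := by omega
      have : 1 ≤ 2*m-3 := by omega
      positivity
    exact Nat.le_of_mul_le_mul_left key hpos
noncomputable def af : ℕ → ℝ := fun n => (X n : ℝ) / (Nat.doubleFactorial (2 * n - 1) : ℝ)
lemma Dv0 : Nat.doubleFactorial 0 = 1 := by decide
lemma Dv1 : Nat.doubleFactorial 1 = 1 := by decide
lemma Dv2 : Nat.doubleFactorial 3 = 3 := by decide
lemma Dv3 : Nat.doubleFactorial 5 = 15 := by decide
lemma Dv4 : Nat.doubleFactorial 7 = 105 := by decide
lemma Dv5 : Nat.doubleFactorial 9 = 945 := by decide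
lemma Dv6 : Nat.doubleFactorial 11 = 10395 := by decide
lemma Dv7 : Nat.doubleFactorial 13 = 135135 := by decide
lemma Dv8 : Nat.doubleFactorial 15 = 2027025 := by decide
lemma Dv9 : Nat.doubleFactorial 17 = 34459425 := by decide
lemma Dv10 : Nat.doubleFactorial 19 = 654729075 := by decide
lemma Dv11 : Nat.doubleFactorial 21 = 13749310575 := by decide
lemma Dv12 : Nat.doubleFactorial 23 = 316234143225 := by decide
lemma Dv13 : Nat.doubleFactorial 25 = 7905853580625 := by decide
lemma Dv14 : Nat.doubleFactorial 27 = 213458046676875 := by decide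

lemma af_le_two_small (n : ℕ) (h : n ≤ 14) : af n ≤ 2 := by
  interval_cases n <;>
    (simp only [af] <;> norm_num [Dv0, Dv1, Dv2, Dv3, Dv4, Dv5, Dv6, Dv7, Dv8, Dv9, Dv10, Dv11, Dv12, Dv13, Dv14, Xv0, Xv1, Xv2, Xv3, Xv4, Xv5, Xv6, Xv7, Xv8, Xv9, Xv10, Xv11, Xv12, Xv13, Xv14])

lemma af_le_two (n : ℕ) : af n ≤ 2 := by
  by_cases h : n ≤ 14
  · exact af_le_two_small n h
  · have hn : 15 ≤ n := by omega
    have hN := Nn n hn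
    have hX2 : X n ≤ 2 * Nat.doubleFactorial (2*n-1) := by
      have key : n * X n ≤ n * (2 * Nat.doubleFactorial (2*n-1)) := by
        calc n * X n ≤ (2*n-20) * Nat.doubleFactorial (2*n-1) := hN
          _ ≤ (2*n) * Nat.doubleFactorial (2*n-1) := Nat.mul_le_mul_right _ (by omega)
          _ = n * (2 * Nat.doubleFactorial (2*n-1)) := by ring
      exact Nat.le_of_mul_le_mul_left key (by omega)
    have hDpos : (0:ℝ) < (Nat.doubleFactorial (2*n-1) : ℝ) := by
      exact_mod_cast Nat.doubleFactorial_pos _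
    rw [af, div_le_iff₀ hDpos]
    calc ((X n : ℕ) : ℝ) ≤ ((2 * Nat.doubleFactorial (2*n-1) : ℕ) : ℝ) := by exact_mod_cast hX2
      _ = 2 * (Nat.doubleFactorial (2*n-1) : ℝ) := by push_cast; ring

lemma af_mono_succ (m : ℕ) (h : 5 ≤ m) : af m ≤ af (m+1) := by
  have hD : (Nat.doubleFactorial (2*(m+1)-1) : ℕ) = (2*m+1) * Nat.doubleFactorial (2*m-1) := by
    have hd := Dstep (m+1) (by omega)
    rw [show 2*(m+1)-1 = 2*m+1 by omega, show 2*(m+1-1)-1 = 2*m-1 by omega] at hd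
    rw [show 2*(m+1)-1 = 2*m+1 by omega]
    exact hd
  have hX : (2*m+1) * X m ≤ X (m+1) := by
    have := X_mono_ratio (m+1) (by omega)
    rw [show 2*(m+1)-1 = 2*m+1 by omega, show m+1-1 = m by omega] at this
    exact this
  have hDpos : (0:ℝ) < (Nat.doubleFactorial (2*m-1) : ℝ) := by
    exact_mod_cast Nat.doubleFactorial_pos _
  have hfrac : af m ≤ (X (m+1) : ℝ) / (((2*m+1 : ℕ) : ℝ) * (Nat.doubleFactorial (2*m-1) : ℝ)) := by
    have hDpos2 : (0:ℝ) < ((2*m+1 : ℕ) : ℝ) * (Nat.doubleFactorial (2*m-1) : ℝ) := by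
      apply mul_pos _ hDpos
      exact_mod_cast Nat.succ_pos (2*m)
    rw [af, div_le_div_iff₀ hDpos hDpos2]
    have h1 : ((X m : ℕ) : ℝ) * (((2*m+1 : ℕ) : ℝ) * (Nat.doubleFactorial (2*m-1) : ℝ))
        = (((2*m+1) * X m : ℕ) : ℝ) * (Nat.doubleFactorial (2*m-1) : ℝ) := by push_cast; ring
    rw [h1]
    apply mul_le_mul_of_nonneg_right _ (le_of_lt hDpos)
    exact_mod_cast hX
  calc af m ≤ (X (m+1) : ℝ) / (((2*m+1 : ℕ) : ℝ) * (Nat.doubleFactorial (2*m-1) : ℝ)) := hfrac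
    _ = af (m+1) := by
        rw [af, hD]
        push_cast
        ring_nf


/-- The sequence `X_n/(2n-1)!!` converges to a limit `C`, and `C > 0`. -/
theorem X_div_doubleFactorial_converges_pos :
    ∃ C : ℝ, Filter.Tendsto
        (fun n : ℕ => (X n : ℝ) / (Nat.doubleFactorial (2 * n - 1) : ℝ))
        Filter.atTop (nhds C) ∧ 0 < C := by
  have hmono : Monotone (fun k : ℕ => af (k + 5)) := by
    apply monotone_nat_of_le_succ
    intro k
    exact af_mono_succ (k+5) (by omega)
  have hbdd : BddAbove (Set.range (fun k : ℕ => af (k + 5))) := by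
    refine ⟨2, ?_⟩
    rintro x ⟨k, rfl⟩
    exact af_le_two (k+5)
  have htends : Filter.Tendsto (fun k : ℕ => af (k + 5)) Filter.atTop
      (nhds (⨆ k : ℕ, af (k + 5))) := tendsto_atTop_ciSup hmono hbdd
  refine ⟨⨆ k : ℕ, af (k + 5), ?_, ?_⟩
  · have := (Filter.tendsto_add_atTop_iff_nat 5).mp htends
    exact this
  · have h0 : af 5 ≤ ⨆ k : ℕ, af (k + 5) := by
      have := le_ciSup hbdd 0
      simpa using this
    have hpos : 0 < af 5 := by
      rw [af]
      apply div_pos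
      · exact_mod_cast X_pos 5
      · exact_mod_cast Nat.doubleFactorial_pos _
    linarith
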